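/- Let α be a right-maximal repeat of a string w and let β be a prefix of α. If α contains β at least twice (once as a prefix of α and once at another position inside α), then β is not an α-extendable prefix of α; that is, the right-extension closure r(β) of β in w is not equal to α. -/
import Mathlib


open Set List

variable {A : Type*}

/-- `β` occurs in `w` at (0-indexed) position `i`, i.e. `w[i..i+|β|-1] = β`. -/
def OccursAt (w β : List A) (i : ℕ) : Prop := β <+: w.drop i

/-- A repeat of `w`: a nonempty string occurring in `w` at two distinct positions. -/
def IsRepeat (w β : List A) : Prop :=
  β ≠ [] ∧ ∃ i j, i ≠ j ∧ OccursAt w β i ∧ OccursAt w β j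

/-- A right-maximal repeat of `w`: a repeat with two occurrences whose right-adjacent
characters differ.  The right-adjacent character of the occurrence at `i` is
`w[i+|β|]?  : Option A`; the value `none` (an occurrence at the right end of `w`)
plays the role of the special character distinct from all alphabet characters. -/
def IsRMRepeat (w β : List A) : Prop :=
  β ≠ [] ∧ ∃ i j, i ≠ j ∧ OccursAt w β i ∧ OccursAt w β j ∧
    w[i + β.length]? ≠ w[j + β.length]?

/-- `RightExtClosure w β α` says that `α = r(β)`, the right-maximal repeat obtained
from `β` by repeatedly appending the unique common right-adjacent character of all
of its occurrences: equivalently, `α` is a right-maximal repeat of `w` extending `β`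
such that no intermediate extension `γ` (with `β ≤ γ < α`) is already right-maximal. -/
def RightExtClosure (w β α : List A) : Prop :=
  IsRMRepeat w α ∧ β <+: α ∧
    ∀ γ, β <+: γ → γ <+: α → γ ≠ α → ¬ IsRMRepeat w γ

/-- If `l₁` is a prefix of `l₂` and `n < l₁.length` then `l₂[n]? = some l₁[n]`. -/
lemma prefix_getElem?_aux {l₁ l₂ : List A} (h : l₁ <+: l₂) {n : ℕ} (hn : n < l₁.length) :
    l₂[n]? = some (l₁[n]) := by
  obtain ⟨t, rfl⟩ := h
  rw [List.getElem?_append_left hn, List.getElem?_eq_getElem hn]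

/-- Extend an occurrence by one character. -/
lemma prefix_append_singleton_aux {γ l : List A} {c : A} (h : γ <+: l)
    (hc : l[γ.length]? = some c) : γ ++ [c] <+: l := by
  obtain ⟨t, rfl⟩ := h
  rw [List.getElem?_append_right (le_refl _), Nat.sub_self] at hc
  obtain ⟨t', rfl⟩ : ∃ t', t = c :: t' := by
    cases t with
    | nil => simp at hc
    | cons a t' => simp at hc; exact ⟨t', by rw [hc]⟩
  exact ⟨t', by simp⟩

/-- if a right-maximal repeat `α` of `w` contains its (nonempty) prefix `β`
at least twice — once as a prefix and once elsewhere inside `α` — then `β` is not an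
`α`-extendable prefix of `α`, i.e. `r(β) ≠ α`. -/
theorem not_extendable_of_contained_twice (w α β : List A)
    (hα : IsRMRepeat w α) (hpre : β <+: α) (hβ : β ≠ [])
    (htwice : ∃ k, 0 < k ∧ β <+: α.drop k) :
    ¬ RightExtClosure w β α := by
  rintro ⟨hRM, -, hmin⟩
  obtain ⟨hαne, i, j, hij, hi, hj, hdiff⟩ := hRM
  obtain ⟨k, hk, hkocc⟩ := htwice
  have hβlen : 0 < β.length := List.length_pos_iff.mpr hβ
  have hkα : k < α.length := by
    by_contra h
    push_neg at h
    rw [List.drop_eq_nil_of_le h] at hkocc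
    exact hβ (List.prefix_nil.mp hkocc)
  have hβα : β.length ≤ α.length := hpre.length_le
  -- key claim : occurrences of β next to an occurrence of α propagate to all of α
  have key : ∀ q p, α <+: w.drop q → p ≠ q → β <+: w.drop p →
      ∀ t, β.length ≤ t → t ≤ α.length → α.take t <+: w.drop p := by
    intro q p hq hpq hp t ht htα
    induction t, ht using Nat.le_induction with
    | base =>
      have : α.take β.length = β := by
        obtain ⟨s, rfl⟩ := hpre
        simp [List.take_append_of_le_length (le_refl _)]
      rwa [this]
    | succ t ht ih =>
      have htlt : t < α.length := htα
      have hγ : α.take t <+: w.drop p := ih (le_of_lt htlt)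
      have hγq : α.take t <+: w.drop q := (List.take_prefix t α).trans hq
      have hγlen : (α.take t).length = t := by simp [le_of_lt htlt]
      have hγne : α.take t ≠ [] := by
        intro h
        have := congrArg List.length h
        rw [hγlen] at this
        simp at this
        omega
      have hβγ : β <+: α.take t := by
        rw [List.prefix_take_iff]
        exact ⟨hpre, ht⟩
      have hγnea : α.take t ≠ α := by
        intro h
        have := congrArg List.length h
        rw [hγlen] at this
        omega
      have hnotRM : ¬ IsRMRepeat w (α.take t) :=
        hmin _ hβγ (List.take_prefix t α) hγnea
      have hsame : w[p + t]? = w[q + t]? := by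
        by_contra hne
        exact hnotRM ⟨hγne, p, q, hpq, hγ, hγq, by rwa [hγlen]⟩
      have hqval : w[q + t]? = some (α[t]) := by
        rw [← List.getElem?_drop]
        exact prefix_getElem?_aux hq htlt
      have hstep : α.take (t + 1) = α.take t ++ [α[t]] := by
        rw [List.take_succ, List.getElem?_eq_getElem htlt]
        rfl
      rw [hstep]
      apply prefix_append_singleton_aux hγ
      rw [hγlen, List.getElem?_drop, hsame, hqval]
  -- β occurs at i + k and j + k
  have hik : β <+: w.drop (i + k) := by
    calc β <+: α.drop k := hkocc
    _ <+: (w.drop i).drop k := hi.drop k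
    _ = w.drop (i + k) := by rw [List.drop_drop, Nat.add_comm]
  have hjk : β <+: w.drop (j + k) := by
    calc β <+: α.drop k := hkocc
    _ <+: (w.drop j).drop k := hj.drop k
    _ = w.drop (j + k) := by rw [List.drop_drop, Nat.add_comm]
  have hαik : α <+: w.drop (i + k) := by
    have := key i (i + k) hi (by omega) hik α.length hβα (le_refl _)
    rwa [List.take_length] at this
  have hαjk : α <+: w.drop (j + k) := by
    have := key j (j + k) hj (by omega) hjk α.length hβα (le_refl _)
    rwa [List.take_length] at this
  -- now both next characters equal α[α.length - k], contradiction
  have hsub : α.length - k < α.length := by omega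
  have h1 : w[i + α.length]? = some (α[α.length - k]) := by
    have : i + α.length = (i + k) + (α.length - k) := by omega
    rw [this, ← List.getElem?_drop]
    exact prefix_getElem?_aux hαik hsub
  have h2 : w[j + α.length]? = some (α[α.length - k]) := by
    have : j + α.length = (j + k) + (α.length - k) := by omega
    rw [this, ← List.getElem?_drop]
    exact prefix_getElem?_aux hαjk hsub
  exact hdiff (h1.trans h2.symm)
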